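/- arXiv:2107.06023 — 2 statements merged into one kernel-verified Lean document; each statement's English description precedes it below -/
import Mathlib

section
/- For every integer $d \ge 1$, the identity $\sum_{k+m+n=d,\ k,m,n\ge 0} \dfrac{v^{\binom{n+1}{2} - 2km + 2k}}{[n]!\,[2k]^{!!}\,[2m]^{!!}} = \dfrac{2 v^d (v+v^{-1})(v^2+v^{-2})\cdots(v^{d-1}+v^{1-d})}{[d]!}$ holds in $\mathbb{Q}(v)$. -/
noncomputable section

abbrev K : Type := RatFunc ℚ

/-- The indeterminate `v` in `ℚ(v)`. -/
def v : K := RatFunc.X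

/-- Quantum integer `[m] = (v^m - v^{-m})/(v - v^{-1})`. -/
def qint (m : ℤ) : K := (v ^ m - v ^ (-m)) / (v - v⁻¹)

/-- Quantum factorial `[r]! = ∏_{i=1}^r [i]`. -/
def qfact (r : ℕ) : K := ∏ i ∈ Finset.range r, qint ((i : ℤ) + 1)

/-- Quantum double factorial `[2r]!! = ∏_{i=1}^r [2i]`. -/
def qdfact (r : ℕ) : K := ∏ i ∈ Finset.range r, qint (2 * ((i : ℤ) + 1))

/-- Balanced Gaussian binomial coefficient `[m][m-1]⋯[m-r+1]/[r]!`. -/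
def qbinom (m : ℤ) (r : ℕ) : K := (∏ i ∈ Finset.range r, qint (m - (i : ℤ))) / qfact r

/-- Gaussian binomial with integer lower index, vanishing for negative lower index. -/
def qbinomZ (m r : ℤ) : K := if 0 ≤ r then qbinom m r.toNat else 0

lemma v_ne : (v : K) ≠ 0 := RatFunc.X_ne_zero

lemma vmul {a b c : ℤ} (h : a + b = c) : v ^ a * v ^ b = v ^ c := by
  rw [← zpow_add₀ v_ne, h]

lemma v_pow_ne_one {n : ℕ} (hn : n ≠ 0) : (v : K) ^ n ≠ 1 := by
  intro h
  have hX : (RatFunc.X : K) = algebraMap (Polynomial ℚ) K Polynomial.X :=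
    (RatFunc.algebraMap_X).symm
  rw [v, hX, ← map_pow, ← map_one (algebraMap (Polynomial ℚ) K)] at h
  have := RatFunc.algebraMap_injective (K := ℚ) h
  have h2 := congrArg Polynomial.natDegree this
  simp [Polynomial.natDegree_X_pow] at h2
  exact hn h2

lemma v_zpow_ne_one {n : ℤ} (hn : n ≠ 0) : (v : K) ^ n ≠ 1 := by
  rcases lt_trichotomy n 0 with h | h | h
  · intro hc
    have h2 : (v : K) ^ (-n) = 1 := by
      rw [zpow_neg, hc, inv_one]
    refine v_pow_ne_one (n := (-n).toNat) (by omega) ?_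
    rw [← zpow_natCast, Int.toNat_of_nonneg (by omega)]
    exact h2
  · exact absurd h hn
  · intro hc
    refine v_pow_ne_one (n := n.toNat) (by omega) ?_
    rw [← zpow_natCast, Int.toNat_of_nonneg (by omega)]
    exact hc

lemma qint_ne_zero {m : ℤ} (hm : m ≠ 0) : qint m ≠ 0 := by
  unfold qint
  apply div_ne_zero
  · have h1 : v ^ m - v ^ (-m) = v ^ (-m) * (v ^ (2 * m) - 1) := by
      rw [mul_sub, mul_one, vmul (show -m + 2*m = m by ring)]
    rw [h1]
    exact mul_ne_zero (zpow_ne_zero _ v_ne)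
      (sub_ne_zero.2 fun hc => v_zpow_ne_one (show 2*m ≠ 0 by omega) hc)
  · have h1 : v - v⁻¹ = v ^ (-1 : ℤ) * (v ^ (2 : ℤ) - 1) := by
      rw [mul_sub, mul_one, vmul (show (-1:ℤ) + 2 = 1 by ring), zpow_one, zpow_neg_one]
    rw [h1]
    exact mul_ne_zero (zpow_ne_zero _ v_ne)
      (sub_ne_zero.2 fun hc => v_zpow_ne_one (show (2:ℤ) ≠ 0 by omega) hc)

lemma qint_zero : qint 0 = 0 := by simp [qint]

lemma qint_pascal (a b : ℤ) : qint (a + b) = v ^ a * qint b + v ^ (-b) * qint a := by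
  unfold qint
  rw [← mul_div_assoc, ← mul_div_assoc, ← add_div]
  congr 1
  rw [mul_sub, mul_sub, vmul (by ring : a + b = a + b), vmul (by ring : a + -b = a - b),
    vmul (by ring : -b + a = a - b), vmul (by ring : -b + -a = -(a+b))]
  ring

lemma qint_two_mul (m : ℤ) : qint (2 * m) = (v ^ m + v ^ (-m)) * qint m := by
  unfold qint
  rw [← mul_div_assoc]
  congr 1
  rw [add_mul, mul_sub, mul_sub, vmul (by ring : m + m = 2*m), vmul (by ring : m + -m = 0),
    vmul (by ring : -m + m = 0), vmul (by ring : -m + -m = -(2*m))]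
  ring

lemma qfact_succ (n : ℕ) : qfact (n + 1) = qfact n * qint ((n : ℤ) + 1) :=
  Finset.prod_range_succ _ n

lemma qdfact_succ (n : ℕ) : qdfact (n + 1) = qdfact n * qint (2 * ((n : ℤ) + 1)) :=
  Finset.prod_range_succ _ n

lemma qfact_ne_zero (n : ℕ) : qfact n ≠ 0 := by
  unfold qfact
  rw [Finset.prod_ne_zero_iff]
  exact fun i _ => qint_ne_zero (by omega)

lemma qdfact_ne_zero (n : ℕ) : qdfact n ≠ 0 := by
  unfold qdfact
  rw [Finset.prod_ne_zero_iff]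
  exact fun i _ => qint_ne_zero (by omega)

lemma qfact_zero : qfact 0 = 1 := by simp [qfact]
lemma qdfact_zero : qdfact 0 = 1 := by simp [qdfact]

lemma hcancel (E : ℤ) (q A B : K) (hq : q ≠ 0) :
    v ^ E * q / (A * (B * q)) = v ^ E / (A * B) := by
  rw [show A * (B * q) = (A * B) * q by ring, mul_div_mul_right _ _ hq]

lemma hcancel' (E : ℤ) (q A B : K) (hq : q ≠ 0) :
    v ^ E * q / ((A * q) * B) = v ^ E / (A * B) := by
  rw [show (A * q) * B = (A * B) * q by ring, mul_div_mul_right _ _ hq]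

lemma hsplit (E F G : ℤ) (h : E = F + G) (D : K) :
    v ^ E / D = v ^ F * (v ^ G / D) := by
  rw [h, zpow_add₀ v_ne]; ring

lemma hshift (a b c' : ℤ) (h : b + a = c') (q D : K) :
    v ^ a * q * (v ^ b / D) = v ^ c' * q / D := by
  rw [← h, zpow_add₀ v_ne]; ring

def Afun (c : ℕ) : K :=
  ∑ k ∈ Finset.range (c + 1),
    v ^ (2 * (k : ℤ) * ((k : ℤ) - (c : ℤ) + 1)) / (qdfact k * qdfact (c - k))

lemma Afun_rec (c : ℕ) :
    qint (2 * ((c : ℤ) + 1)) * Afun (c + 1) = (v ^ (-2 * (c : ℤ)) + v ^ (2 : ℤ)) * Afun c := by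
  have key : ∀ k ∈ Finset.range (c + 2),
      qint (2 * ((c : ℤ) + 1)) *
        (v ^ (2 * (k : ℤ) * ((k : ℤ) - ((c:ℕ)+1 : ℕ) + 1)) / (qdfact k * qdfact (c + 1 - k)))
      = (v ^ (2 * (k : ℤ) * ((k:ℤ) - c) - 2 * k) * qint (2 * ((c : ℤ) + 1 - k))
            / (qdfact k * qdfact (c + 1 - k)))
        + (v ^ (2 * (k : ℤ) * ((k:ℤ) - c) + 2 * ((c : ℤ) + 1 - k)) * qint (2 * (k : ℤ))
            / (qdfact k * qdfact (c + 1 - k))) := by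
    intro k hk
    have hk' : k ≤ c + 1 := by simpa [Nat.lt_succ_iff] using hk
    have hp : qint (2 * ((c : ℤ) + 1)) =
        v ^ (2 * ((c : ℤ) + 1 - k)) * qint (2 * (k : ℤ))
          + v ^ (-(2 * (k:ℤ))) * qint (2 * ((c : ℤ) + 1 - k)) := by
      have := qint_pascal (2 * ((c : ℤ) + 1 - k)) (2 * (k : ℤ))
      rw [show 2 * ((c:ℤ) + 1 - k) + 2 * k = 2 * ((c:ℤ)+1) by ring] at this
      exact this
    rw [hp]
    push_cast
    rw [add_mul, add_comm]
    congr 1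
    · exact hshift _ _ _ (by ring) _ _
    · exact hshift _ _ _ (by ring) _ _
  unfold Afun
  rw [Finset.mul_sum, Finset.sum_congr rfl key, Finset.sum_add_distrib]
  have hS1 : (∑ k ∈ Finset.range (c + 2),
      v ^ (2 * (k : ℤ) * ((k:ℤ) - c) - 2 * k) * qint (2 * ((c : ℤ) + 1 - k))
        / (qdfact k * qdfact (c + 1 - k)))
      = v ^ (-2 * (c : ℤ)) *
        ∑ k ∈ Finset.range (c + 1),
          v ^ (2 * (k : ℤ) * ((k : ℤ) - (c : ℤ) + 1)) / (qdfact k * qdfact (c - k)) := by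
    rw [Finset.sum_range_succ]
    have hlast : qint (2 * ((c : ℤ) + 1 - ((c:ℕ)+1 : ℕ))) = 0 := by
      rw [show 2 * ((c : ℤ) + 1 - ((c:ℕ)+1 : ℕ)) = 0 by push_cast; ring, qint_zero]
    rw [hlast, mul_zero, zero_div, add_zero]
    have step : ∀ k ∈ Finset.range (c + 1),
        v ^ (2 * (k : ℤ) * ((k:ℤ) - c) - 2 * k) * qint (2 * ((c : ℤ) + 1 - k))
          / (qdfact k * qdfact (c + 1 - k))
        = v ^ (2 * (k : ℤ) * ((k:ℤ) - c) - 2 * k) / (qdfact k * qdfact (c - k)) := by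
      intro k hk
      have hk' : k ≤ c := by simpa [Nat.lt_succ_iff] using hk
      have h1 : c + 1 - k = (c - k) + 1 := by omega
      have h2 : (2 : ℤ) * ((c : ℤ) + 1 - k) = 2 * (((c - k : ℕ) : ℤ) + 1) := by
        push_cast [hk']; ring
      rw [h1, qdfact_succ, h2]
      exact hcancel _ _ _ _ (qint_ne_zero (by omega))
    rw [Finset.sum_congr rfl step, Finset.mul_sum,
      ← Finset.sum_range_reflect (fun k => v ^ (2 * (k : ℤ) * ((k:ℤ) - c) - 2 * k)
          / (qdfact k * qdfact (c - k))) (c+1)]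
    refine Finset.sum_congr rfl ?_
    intro j hj
    have hj' : j ≤ c := by simpa [Nat.lt_succ_iff] using hj
    have h1 : c + 1 - 1 - j = c - j := by omega
    have h2 : c - (c - j) = j := by omega
    have h3 : ((c - j : ℕ) : ℤ) = (c : ℤ) - j := by push_cast [hj']; ring
    rw [h1, h2, h3,
      show 2 * ((c:ℤ) - j) * (((c:ℤ) - j) - c) - 2 * ((c:ℤ) - j)
        = (-2*(c:ℤ)) + 2 * (j:ℤ) * ((j:ℤ) - c + 1) by ring,
      zpow_add₀ v_ne, mul_comm (qdfact (c - j)) (qdfact j)]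
    ring
  have hS2 : (∑ k ∈ Finset.range (c + 2),
      v ^ (2 * (k : ℤ) * ((k:ℤ) - c) + 2 * ((c : ℤ) + 1 - k)) * qint (2 * (k : ℤ))
        / (qdfact k * qdfact (c + 1 - k)))
      = v ^ (2 : ℤ) *
        ∑ k ∈ Finset.range (c + 1),
          v ^ (2 * (k : ℤ) * ((k : ℤ) - (c : ℤ) + 1)) / (qdfact k * qdfact (c - k)) := by
    rw [Finset.sum_range_succ']
    have hz : qint (2 * ((0:ℕ) : ℤ)) = 0 := by norm_num [qint_zero]
    rw [hz, mul_zero, zero_div, add_zero, Finset.mul_sum]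
    refine Finset.sum_congr rfl ?_
    intro j hj
    have hj' : j ≤ c := by simpa [Nat.lt_succ_iff] using hj
    have h1 : c + 1 - (j + 1) = c - j := by omega
    have h2 : (2 : ℤ) * (((j+1 : ℕ)) : ℤ) = 2 * ((j : ℤ) + 1) := by push_cast; ring
    rw [h1, qdfact_succ, h2]
    rw [hcancel' _ _ _ _ (qint_ne_zero (by omega))]
    exact hsplit _ 2 (2*(j:ℤ)*((j:ℤ)-c+1)) (by push_cast; ring) _
  rw [hS1, hS2]
  ring

lemma choose2_succ (c : ℕ) : (c+1).choose 2 = c.choose 2 + c := by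
  rw [Nat.choose_succ_succ, Nat.choose_one_right, Nat.add_comm]

lemma Afun_eq (c : ℕ) : Afun c = v ^ ((c : ℤ) - (c.choose 2 : ℕ)) / qfact c := by
  induction c with
  | zero => simp [Afun, qfact_zero, qdfact_zero]
  | succ c ih =>
    have hq2 : qint (2 * ((c:ℤ)+1)) ≠ 0 := qint_ne_zero (by omega)
    have hq : qint ((c:ℤ)+1) ≠ 0 := qint_ne_zero (by omega)
    have hstep : Afun (c+1) = (v ^ (-2*(c:ℤ)) + v^(2:ℤ)) * Afun c / qint (2*((c:ℤ)+1)) := by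
      rw [eq_div_iff hq2, mul_comm]
      have := Afun_rec c
      push_cast at this ⊢
      exact this
    have hP : (v ^ ((c:ℤ)+1) + v ^ (-((c:ℤ)+1))) ≠ 0 := by
      have := hq2
      rw [qint_two_mul ((c:ℤ)+1)] at this
      exact (mul_ne_zero_iff.1 this).1
    have hfac : v ^ (-2*(c:ℤ)) + v^(2:ℤ)
        = v ^ (1 - (c:ℤ)) * (v ^ ((c:ℤ)+1) + v ^ (-((c:ℤ)+1))) := by
      rw [mul_add, vmul (show (1-(c:ℤ)) + ((c:ℤ)+1) = 2 by ring),
        vmul (show (1-(c:ℤ)) + (-((c:ℤ)+1)) = -2*(c:ℤ) by ring)]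
      ring
    have hexp : ((c+1 : ℕ) : ℤ) - (((c+1).choose 2 : ℕ) : ℤ)
        = (1 - (c:ℤ)) + ((c : ℤ) - (c.choose 2 : ℕ)) := by
      rw [choose2_succ]; push_cast; ring
    rw [hstep, ih, qint_two_mul ((c:ℤ)+1), qfact_succ, hfac, hexp]
    rw [show v ^ (1-(c:ℤ)) * (v ^ ((c:ℤ)+1) + v ^ (-((c:ℤ)+1))) * (v ^ ((c:ℤ) - (c.choose 2:ℕ)) / qfact c)
        = (v ^ ((c:ℤ)+1) + v ^ (-((c:ℤ)+1))) * (v ^ (1-(c:ℤ)) * v ^ ((c:ℤ) - (c.choose 2:ℕ)) / qfact c) by ring,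
      mul_div_mul_left _ _ hP, div_div, ← zpow_add₀ v_ne]

def Theta (m s : ℕ) : K :=
  ∑ n ∈ Finset.range (m + 1),
    v ^ (((m : ℤ) - 1 + 2 * s) * n) / (qfact n * qfact (m - n))

lemma Theta_rec (m s : ℕ) :
    qint ((m : ℤ) + 1) * Theta (m + 1) s = (1 + v ^ (2 * (s : ℤ))) * Theta m (s + 1) := by
  have key : ∀ n ∈ Finset.range (m + 2),
      qint ((m : ℤ) + 1) *
        (v ^ ((((m+1:ℕ) : ℤ) - 1 + 2 * s) * n) / (qfact n * qfact (m + 1 - n)))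
      = (v ^ (((m:ℤ) + 2 * s) * n + n) * qint ((m : ℤ) + 1 - n)
            / (qfact n * qfact (m + 1 - n)))
        + (v ^ (((m:ℤ) + 2 * s) * n + n - ((m:ℤ)+1)) * qint (n : ℤ)
            / (qfact n * qfact (m + 1 - n))) := by
    intro n hn
    have hp : qint ((m : ℤ) + 1) =
        v ^ (n : ℤ) * qint ((m:ℤ) + 1 - n) + v ^ (-((m:ℤ) + 1 - n)) * qint (n : ℤ) := by
      have := qint_pascal (n : ℤ) ((m:ℤ) + 1 - n)
      rw [show (n:ℤ) + ((m:ℤ) + 1 - n) = (m:ℤ) + 1 by ring] at this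
      exact this
    rw [hp, add_mul]
    congr 1
    · exact hshift _ _ _ (by push_cast; ring) _ _
    · exact hshift _ _ _ (by push_cast; ring) _ _
  unfold Theta
  rw [Finset.mul_sum, Finset.sum_congr rfl key, Finset.sum_add_distrib]
  have hS1 : (∑ n ∈ Finset.range (m + 2),
      v ^ (((m:ℤ) + 2 * s) * n + n) * qint ((m : ℤ) + 1 - n)
        / (qfact n * qfact (m + 1 - n)))
      = ∑ n ∈ Finset.range (m + 1),
          v ^ ((((m:ℕ) : ℤ) - 1 + 2 * ((s+1:ℕ) : ℤ)) * n) / (qfact n * qfact (m - n)) := by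
    rw [Finset.sum_range_succ]
    have hlast : qint ((m : ℤ) + 1 - ((m+1:ℕ) : ℤ)) = 0 := by
      rw [show (m : ℤ) + 1 - ((m+1:ℕ) : ℤ) = 0 by push_cast; ring, qint_zero]
    rw [hlast, mul_zero, zero_div, add_zero]
    refine Finset.sum_congr rfl ?_
    intro n hn
    have hn' : n ≤ m := by simpa [Nat.lt_succ_iff] using hn
    have h1 : m + 1 - n = (m - n) + 1 := by omega
    have h2 : (m : ℤ) + 1 - n = ((m - n : ℕ) : ℤ) + 1 := by push_cast [hn']; ring
    rw [h1, qfact_succ, h2, hcancel _ _ _ _ (qint_ne_zero (by omega))]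
    congr 1
    push_cast
    ring
  have hS2 : (∑ n ∈ Finset.range (m + 2),
      v ^ (((m:ℤ) + 2 * s) * n + n - ((m:ℤ)+1)) * qint (n : ℤ)
        / (qfact n * qfact (m + 1 - n)))
      = v ^ (2 * (s:ℤ)) *
        ∑ n ∈ Finset.range (m + 1),
          v ^ ((((m:ℕ) : ℤ) - 1 + 2 * ((s+1:ℕ) : ℤ)) * n) / (qfact n * qfact (m - n)) := by
    rw [Finset.sum_range_succ']
    have hz : qint ((0:ℕ) : ℤ) = 0 := by norm_num [qint_zero]
    rw [hz, mul_zero, zero_div, add_zero, Finset.mul_sum]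
    refine Finset.sum_congr rfl ?_
    intro j hj
    have hj' : j ≤ m := by simpa [Nat.lt_succ_iff] using hj
    have h1 : m + 1 - (j + 1) = m - j := by omega
    have h2 : ((j + 1 : ℕ) : ℤ) = (j : ℤ) + 1 := by push_cast; ring
    rw [h1, h2, qfact_succ, hcancel' _ _ _ _ (qint_ne_zero (by omega))]
    exact hsplit _ (2*(s:ℤ)) _ (by push_cast; ring) _
  rw [hS1, hS2]
  ring

lemma Theta_eq (m : ℕ) : ∀ s : ℕ,
    Theta m s = (∏ j ∈ Finset.range m, (1 + v ^ (2 * ((s : ℤ) + j)))) / qfact m := by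
  induction m with
  | zero => intro s; simp [Theta, qfact_zero]
  | succ m ih =>
    intro s
    have hq : qint ((m:ℤ)+1) ≠ 0 := qint_ne_zero (by omega)
    have hstep : Theta (m+1) s = (1 + v ^ (2 * (s : ℤ))) * Theta m (s+1) / qint ((m:ℤ)+1) := by
      rw [eq_div_iff hq, mul_comm]
      exact Theta_rec m s
    rw [hstep, ih (s+1), qfact_succ]
    rw [Finset.prod_range_succ' (fun j => 1 + v ^ (2 * ((s : ℤ) + j))) m]
    have hprod : (∏ j ∈ Finset.range m, (1 + v ^ (2 * ((s:ℤ) + (j + 1 : ℕ)))))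
        = ∏ j ∈ Finset.range m, (1 + v ^ (2 * (((s+1:ℕ) : ℤ) + j))) := by
      refine Finset.prod_congr rfl ?_
      intro j _
      congr 2
      push_cast
      ring
    rw [hprod]
    rw [show ((1:K) + v ^ (2 * (s:ℤ))) * ((∏ j ∈ Finset.range m, (1 + v ^ (2 * (((s+1:ℕ):ℤ) + j)))) / qfact m)
        = (∏ j ∈ Finset.range m, (1 + v ^ (2 * (((s+1:ℕ):ℤ) + j)))) * (1 + v ^ (2 * (s:ℤ))) / qfact m by ring]
    rw [div_div]
    norm_num

lemma choose2_cast (a : ℕ) : ((a.choose 2 : ℕ) : ℤ) * 2 = (a : ℤ) * ((a : ℤ) - 1) := by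
  induction a with
  | zero => simp
  | succ a ih =>
    rw [choose2_succ]
    push_cast at ih ⊢
    linarith

lemma tri_cast (n : ℕ) : ((n * (n + 1) / 2 : ℕ) : ℤ) * 2 = (n : ℤ) * ((n : ℤ) + 1) := by
  have h : 2 ∣ n * (n + 1) := (Nat.even_mul_succ_self n).two_dvd
  have h2 : n * (n + 1) / 2 * 2 = n * (n + 1) := Nat.div_mul_cancel h
  exact_mod_cast congrArg (Nat.cast : ℕ → ℤ) h2

lemma vprod (s : Finset ℕ) (g : ℕ → ℤ) : ∏ j ∈ s, v ^ (g j) = v ^ (∑ j ∈ s, g j) := by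
  classical
  induction s using Finset.induction with
  | empty => simp
  | insert _ _ h ih =>
    rw [Finset.prod_insert h, Finset.sum_insert h, ih, ← zpow_add₀ v_ne]

theorem stmt4 (d : ℕ) (hd : 1 ≤ d) :
    ∑ k ∈ Finset.range (d + 1), ∑ m ∈ Finset.range (d + 1 - k),
      v ^ ((((d - k - m) * (d - k - m + 1) / 2 : ℕ) : ℤ)
            - 2 * (k : ℤ) * m + 2 * (k : ℤ)) /
        (qfact (d - k - m) * qdfact k * qdfact m)
    = 2 * v ^ d *
        (∏ j ∈ Finset.Icc 1 (d - 1), (v ^ (j : ℤ) + v ^ (-(j : ℤ)))) / qfact d := by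
  set f : ℕ → ℕ → K := fun k m =>
    v ^ ((((d - k - m) * (d - k - m + 1) / 2 : ℕ) : ℤ) - 2 * (k : ℤ) * m + 2 * (k : ℤ)) /
      (qfact (d - k - m) * qdfact k * qdfact m) with hf
  have h1 : ∑ k ∈ Finset.range (d + 1), ∑ m ∈ Finset.range (d + 1 - k), f k m
      = ∑ n ∈ Finset.range (d + 1), ∑ k ∈ Finset.range (d + 1 - n), f k (d - n - k) := by
    rw [Finset.sum_sigma' (Finset.range (d+1)) (fun k => Finset.range (d+1-k))
        (fun k m => f k m),
      Finset.sum_sigma' (Finset.range (d+1)) (fun n => Finset.range (d+1-n))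
        (fun n k => f k (d - n - k))]
    refine Finset.sum_nbij' (fun x => ⟨d - x.1 - x.2, x.1⟩) (fun y => ⟨y.2, d - y.1 - y.2⟩)
      ?_ ?_ ?_ ?_ ?_
    · rintro ⟨a, b⟩ ha
      simp only [Finset.mem_sigma, Finset.mem_range] at ha ⊢
      omega
    · rintro ⟨a, b⟩ ha
      simp only [Finset.mem_sigma, Finset.mem_range] at ha ⊢
      omega
    · rintro ⟨a, b⟩ ha
      simp only [Finset.mem_sigma, Finset.mem_range] at ha
      have hb : d - (d - a - b) - a = b := by omega
      simp only [hb]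
    · rintro ⟨a, b⟩ ha
      simp only [Finset.mem_sigma, Finset.mem_range] at ha
      have hb : d - b - (d - a - b) = a := by omega
      simp only [hb]
    · rintro ⟨a, b⟩ ha
      simp only [Finset.mem_sigma, Finset.mem_range] at ha
      have hb : d - (d - a - b) - a = b := by omega
      simp only [hb]
  have h2 : ∀ n ∈ Finset.range (d + 1),
      ∑ k ∈ Finset.range (d + 1 - n), f k (d - n - k)
      = v ^ (((d:ℤ) - 1) * n + ((d : ℤ) - (d.choose 2 : ℕ))) / (qfact n * qfact (d - n)) := by
    intro n hn
    have hn' : n ≤ d := by simpa [Nat.lt_succ_iff] using hn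
    have hc : d + 1 - n = (d - n) + 1 := by omega
    have ht : ∀ k ∈ Finset.range ((d - n) + 1), f k (d - n - k)
        = (v ^ ((n * (n + 1) / 2 : ℕ) : ℤ) / qfact n) *
          (v ^ (2 * (k:ℤ) * ((k:ℤ) - ((d - n : ℕ) : ℤ) + 1)) /
            (qdfact k * qdfact ((d - n) - k))) := by
      intro k hk
      have hk' : k ≤ d - n := by simpa [Nat.lt_succ_iff] using hk
      have e1 : d - k - (d - n - k) = n := by omega
      have e2 : ((d - n - k : ℕ) : ℤ) = (d : ℤ) - n - k := by omega
      have e3 : ((d - n : ℕ) : ℤ) = (d : ℤ) - n := by omega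
      rw [hf]
      simp only [e1]
      rw [div_mul_div_comm,
        vmul (show ((n * (n + 1) / 2 : ℕ) : ℤ) + 2 * (k:ℤ) * ((k:ℤ) - ((d - n : ℕ) : ℤ) + 1)
          = ((n * (n + 1) / 2 : ℕ) : ℤ) - 2 * (k : ℤ) * ((d - n - k : ℕ) : ℤ) + 2 * (k : ℤ)
          by rw [e2, e3]; ring),
        mul_assoc (qfact n) (qdfact k) (qdfact (d - n - k))]
    rw [hc, Finset.sum_congr rfl ht, ← Finset.mul_sum]
    have hA : (∑ k ∈ Finset.range ((d - n) + 1),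
        v ^ (2 * (k:ℤ) * ((k:ℤ) - ((d - n : ℕ) : ℤ) + 1)) /
          (qdfact k * qdfact ((d - n) - k))) = Afun (d - n) := rfl
    rw [hA, Afun_eq (d - n), div_mul_div_comm]
    congr 1
    have hdn : ((d - n : ℕ) : ℤ) = (d : ℤ) - n := by omega
    have hT := tri_cast n
    have hC1 := choose2_cast (d - n)
    have hC2 := choose2_cast d
    rw [hdn] at hC1
    apply vmul
    have h2z : (2:ℤ) ≠ 0 := by norm_num
    apply mul_left_cancel₀ h2z
    rw [hdn]
    linear_combination hT - hC1 + hC2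
  rw [h1, Finset.sum_congr rfl h2]
  have h3 : ∀ n ∈ Finset.range (d + 1),
      v ^ (((d:ℤ) - 1) * n + ((d : ℤ) - (d.choose 2 : ℕ))) / (qfact n * qfact (d - n))
      = v ^ ((d : ℤ) - (d.choose 2 : ℕ)) *
        (v ^ (((d : ℤ) - 1 + 2 * ((0:ℕ) : ℤ)) * n) / (qfact n * qfact (d - n))) := by
    intro n _
    exact hsplit _ _ _ (by push_cast; ring) _
  rw [Finset.sum_congr rfl h3, ← Finset.mul_sum]
  have hTh : (∑ n ∈ Finset.range (d + 1),
      v ^ (((d : ℤ) - 1 + 2 * ((0:ℕ) : ℤ)) * n) / (qfact n * qfact (d - n))) = Theta d 0 := rfl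
  rw [hTh, Theta_eq d 0]
  -- now the product juggling
  obtain ⟨e, rfl⟩ : ∃ e, d = e + 1 := ⟨d - 1, by omega⟩
  rw [Finset.prod_range_succ' (fun j => 1 + v ^ (2 * (((0:ℕ):ℤ) + j))) e]
  have hterm : ∀ j ∈ Finset.range e, (1 + v ^ (2 * (((0:ℕ):ℤ) + ((j+1:ℕ) : ℤ))))
      = v ^ ((j:ℤ) + 1) * (v ^ ((j:ℤ) + 1) + v ^ (-((j:ℤ) + 1))) := by
    intro j _
    have h0 : ((j:ℤ)+1) + ((j:ℤ)+1) = 2 * (((0:ℕ):ℤ) + ((j+1:ℕ):ℤ)) := by push_cast; ring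
    have hm1 : ((j:ℤ)+1) + (-((j:ℤ)+1)) = (0:ℤ) := by ring
    rw [mul_add (v ^ ((j:ℤ)+1)), vmul h0, vmul hm1, zpow_zero, add_comm]
  rw [Finset.prod_congr rfl hterm, Finset.prod_mul_distrib, vprod]
  have hsum : (∑ j ∈ Finset.range e, ((j:ℤ) + 1)) = (((e+1).choose 2 : ℕ) : ℤ) := by
    have h1 := Finset.sum_range_id_mul_two (e + 1)
    have h2 : (∑ j ∈ Finset.range (e+1), j) = ∑ j ∈ Finset.range e, (j + 1) := by
      rw [Finset.sum_range_succ']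
      simp
    have h3 : (e+1).choose 2 = (e+1) * ((e+1) - 1) / 2 := Nat.choose_two_right _
    have h4 : (∑ j ∈ Finset.range e, (j + 1)) = (e+1).choose 2 := by
      set M := (e+1) * ((e+1) - 1) with hM
      rw [h2] at h1
      omega
    push_cast [← h4]
    push_cast [Finset.sum_add_distrib]
    ring
  rw [hsum]
  have hIcc : (∏ j ∈ Finset.range e, (v ^ ((j:ℤ) + 1) + v ^ (-((j:ℤ) + 1))))
      = ∏ j ∈ Finset.Icc 1 (e + 1 - 1), (v ^ (j : ℤ) + v ^ (-(j : ℤ))) := by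
    have he : e + 1 - 1 = e := by omega
    rw [he]
    refine Finset.prod_nbij' (fun j => j + 1) (fun j => j - 1) ?_ ?_ ?_ ?_ ?_
    · intro a ha; simp only [Finset.mem_range] at ha; simp only [Finset.mem_Icc]; omega
    · intro a ha; simp only [Finset.mem_Icc] at ha; simp only [Finset.mem_range]; omega
    · intro a _; show a + 1 - 1 = a; omega
    · intro a ha; simp only [Finset.mem_Icc] at ha; show a - 1 + 1 = a; omega
    · intro a ha
      simp only [Finset.mem_range] at ha
      push_cast
      ring_nf
  rw [hIcc]
  rw [show (1:K) + v ^ (2 * (((0:ℕ):ℤ) + ((0:ℕ):ℤ))) = 2 by norm_num]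
  rw [show (v ^ ((((e+1).choose 2 : ℕ)) : ℤ) *
        (∏ j ∈ Finset.Icc 1 (e + 1 - 1), (v ^ (j : ℤ) + v ^ (-(j : ℤ)))) * 2) / qfact (e+1)
      = v ^ ((((e+1).choose 2 : ℕ)) : ℤ) *
        ((2 * (∏ j ∈ Finset.Icc 1 (e + 1 - 1), (v ^ (j : ℤ) + v ^ (-(j : ℤ))))) / qfact (e+1)) by ring]
  rw [← mul_assoc, vmul (show ((e+1:ℕ):ℤ) - (((e+1).choose 2 : ℕ):ℤ) + (((e+1).choose 2 : ℕ):ℤ)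
      = ((e+1 : ℕ) : ℤ) by ring)]
  rw [← zpow_natCast v (e+1)]
  ring
end
end

section
/- Let $d \ge 1$ and $0 \le k \le d$ be integers. Then $\sum_{s=0}^{k} \dfrac{v^{(1-d)(d-s)} \prod_{j=d-s+1}^{d}(v^j + v^{-j})}{[s]!} (v - v^{-1})^{d-s} = v^{d(k+1-d)} (v - v^{-1})^{d-k} \dfrac{\prod_{j=d-k}^{d-1}(v^j + v^{-j})}{[k]!}$ holds in $\mathbb{Q}(v)$. -/
noncomputable section

lemma hv : v ≠ 0 := RatFunc.X_ne_zero

lemma vpow_natCast (m : ℕ) : v ^ (m : ℤ) = algebraMap (Polynomial ℚ) K (Polynomial.X ^ m) := by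
  rw [zpow_natCast, map_pow, RatFunc.algebraMap_X, v]

lemma vpow_nat_ne_one (m : ℕ) (hm : m ≠ 0) : v ^ (m : ℤ) ≠ 1 := by
  rw [vpow_natCast]
  intro h
  have h2 : algebraMap (Polynomial ℚ) K (Polynomial.X ^ m) = algebraMap (Polynomial ℚ) K 1 := by
    simpa using h
  have := RatFunc.algebraMap_injective (K := ℚ) h2
  have hdeg := congrArg Polynomial.natDegree this
  simp [Polynomial.natDegree_X_pow] at hdeg
  exact hm hdeg

lemma vpow_nat_ne_negone (m : ℕ) (hm : m ≠ 0) : v ^ (m : ℤ) ≠ -1 := by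
  rw [vpow_natCast]
  intro h
  have h2 : algebraMap (Polynomial ℚ) K (Polynomial.X ^ m) = algebraMap (Polynomial ℚ) K (-1) := by
    simpa using h
  have := RatFunc.algebraMap_injective (K := ℚ) h2
  have hdeg := congrArg Polynomial.natDegree this
  simp [Polynomial.natDegree_X_pow] at hdeg
  exact hm hdeg

lemma vzpow_ne_one (n : ℤ) (hn : n ≠ 0) : v ^ n ≠ 1 := by
  rcases lt_or_gt_of_ne hn with h | h
  · intro he
    have : v ^ (-n) = 1 := by
      rw [zpow_neg, he, inv_one]
    have hp := vpow_nat_ne_one (-n).toNat (by omega)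
    rw [Int.toNat_of_nonneg (by omega)] at hp
    exact hp this
  · have hp := vpow_nat_ne_one n.toNat (by omega)
    rwa [Int.toNat_of_nonneg (by omega)] at hp

lemma vzpow_ne_negone (n : ℤ) : v ^ n ≠ -1 := by
  rcases lt_trichotomy n 0 with h | h | h
  · intro he
    have : v ^ (-n) = -1 := by
      rw [zpow_neg, he]
      norm_num
    have hp := vpow_nat_ne_negone (-n).toNat (by omega)
    rw [Int.toNat_of_nonneg (by omega)] at hp
    exact hp this
  · subst h
    rw [zpow_zero]
    intro he
    have h0 : (2:K) = 0 := by linear_combination he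
    have h2 : algebraMap (Polynomial ℚ) K 2 = algebraMap (Polynomial ℚ) K 0 := by
      rw [map_ofNat, map_zero]
      exact h0
    have := RatFunc.algebraMap_injective (K := ℚ) h2
    norm_num at this
  · have hp := vpow_nat_ne_negone n.toNat (by omega)
    rwa [Int.toNat_of_nonneg (by omega)] at hp

lemma hW : v - v⁻¹ ≠ 0 := by
  intro h
  have h2 : v * v = v * v⁻¹ := by
    have : v = v⁻¹ := by linear_combination h
    nth_rewrite 2 [this]
    ring
  rw [mul_inv_cancel₀ hv] at h2
  have : v ^ (2:ℤ) = 1 := by rw [zpow_two, h2]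
  exact vzpow_ne_one 2 (by norm_num) this


lemma vpow_sub_ne (m : ℤ) (hm : m ≠ 0) : v ^ m - v ^ (-m) ≠ 0 := by
  intro h
  have h1 : v ^ m = v ^ (-m) := by linear_combination h
  have h2 : v ^ (2 * m) = 1 := by
    rw [two_mul, zpow_add₀ hv]
    nth_rewrite 2 [h1]
    rw [← zpow_add₀ hv]
    simp
  exact vzpow_ne_one (2 * m) (by omega) h2

lemma qint_ne (m : ℤ) (hm : m ≠ 0) : qint m ≠ 0 :=
  div_ne_zero (vpow_sub_ne m hm) hW

lemma qfact_ne (r : ℕ) : qfact r ≠ 0 := by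
  apply Finset.prod_ne_zero_iff.mpr
  intro i _
  exact qint_ne _ (by omega)

lemma vpow_add_ne (m : ℤ) : v ^ m + v ^ (-m) ≠ 0 := by
  intro h
  have h1 : v ^ m = -v ^ (-m) := by linear_combination h
  have h2 : v ^ (2 * m) = -1 := by
    rw [two_mul, zpow_add₀ hv]
    nth_rewrite 2 [h1]
    rw [mul_neg, ← zpow_add₀ hv]
    simp
  exact vzpow_ne_negone (2 * m) h2

lemma W_mul_qint (m : ℤ) : (v - v⁻¹) * qint m = v ^ m - v ^ (-m) := by
  rw [qint, mul_div_cancel₀ _ hW]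

lemma key (d k : ℤ) :
    v ^ (d * (k + 1 - d)) * (v ^ (k+1) - v ^ (-(k+1)))
      + v ^ ((1 - d) * (d - k - 1)) * (v ^ d + v ^ (-d))
    = v ^ (d * (k + 2 - d)) * (v ^ (d - k - 1) + v ^ (-(d - k - 1))) := by
  have e : ∀ a b : ℤ, v ^ a * v ^ b = v ^ (a + b) := fun a b => (zpow_add₀ hv a b).symm
  rw [mul_sub, mul_add, mul_add, e, e, e, e, e, e]
  rw [show d * (k + 1 - d) + (k + 1) = d * (k + 2 - d) + -(d - k - 1) by ring,
      show (1 - d) * (d - k - 1) + d = d * (k + 2 - d) + (d - k - 1) by ring,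
      show (1 - d) * (d - k - 1) + -d = d * (k + 1 - d) + -(k + 1) by ring]
  ring

lemma prod_Icc_top {a b : ℕ} (h : a ≤ b) (hb : 1 ≤ b) (f : ℕ → K) :
    ∏ j ∈ Finset.Icc a b, f j = (∏ j ∈ Finset.Icc a (b - 1), f j) * f b := by
  obtain ⟨c, rfl⟩ : ∃ c, b = c + 1 := ⟨b - 1, by omega⟩
  rw [Finset.prod_Icc_succ_top (by omega)]
  simp

lemma prod_Icc_bot {a b : ℕ} (h : a ≤ b) (f : ℕ → K) :
    ∏ j ∈ Finset.Icc a b, f j = f a * ∏ j ∈ Finset.Icc (a + 1) b, f j := by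
  rw [Finset.Icc_eq_cons_Ioc h, Finset.prod_cons, Finset.Icc_add_one_left_eq_Ioc]

lemma step_alg (x1 x2 x3 A B W P F Q : K) (hF : F ≠ 0) (hQ : Q ≠ 0)
    (hkey : x1 * (W * Q) + x2 * A = x3 * B) (m : ℕ) :
    x1 * W ^ (m + 1) * P / F + x2 * (P * A) / (F * Q) * W ^ m
      = x3 * W ^ m * (B * P) / (F * Q) := by
  field_simp
  linear_combination (W ^ m * P) * hkey

theorem stmt6 (d k : ℕ) (hd : 1 ≤ d) (hk : k ≤ d) :
    ∑ s ∈ Finset.range (k + 1),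
      v ^ ((1 - (d : ℤ)) * ((d : ℤ) - s)) *
        (∏ j ∈ Finset.Icc (d - s + 1) d, (v ^ (j : ℤ) + v ^ (-(j : ℤ)))) / qfact s *
        (v - v⁻¹) ^ (d - s)
    = v ^ ((d : ℤ) * ((k : ℤ) + 1 - d)) * (v - v⁻¹) ^ (d - k) *
        (∏ j ∈ Finset.Icc (d - k) (d - 1), (v ^ (j : ℤ) + v ^ (-(j : ℤ)))) / qfact k := by
  induction k with
  | zero =>
      rw [Finset.sum_range_one]
      rw [Finset.Icc_eq_empty (by omega : ¬ d - 0 + 1 ≤ d),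
          Finset.Icc_eq_empty (by omega : ¬ d - 0 ≤ d - 1)]
      simp only [Finset.prod_empty, Nat.cast_zero, Nat.sub_zero, mul_one]
      rw [show (1 - (d:ℤ)) * ((d:ℤ) - 0) = (d:ℤ) * ((0:ℤ) + 1 - d) by ring]
      ring
  | succ k ih =>
      have hk' : k ≤ d := by omega
      rw [Finset.sum_range_succ, ih hk']
      obtain ⟨m, hm⟩ : ∃ m, m = d - (k + 1) := ⟨_, rfl⟩
      rw [show d - (k + 1) = m from hm.symm, show d - k = m + 1 by omega]
      rw [prod_Icc_top (show m + 1 ≤ d by omega) hd]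
      rw [prod_Icc_bot (show m ≤ d - 1 by omega)]
      have hqf : qfact (k + 1) = qfact k * qint ((k : ℤ) + 1) := Finset.prod_range_succ _ _
      rw [hqf]
      have hkey : v ^ ((d:ℤ) * ((k:ℤ) + 1 - d)) * ((v - v⁻¹) * qint ((k:ℤ) + 1))
          + v ^ ((1 - (d:ℤ)) * ((d:ℤ) - ((k+1 : ℕ) : ℤ))) * (v ^ (d:ℤ) + v ^ (-(d:ℤ)))
          = v ^ ((d:ℤ) * (((k+1 : ℕ) : ℤ) + 1 - d)) * (v ^ (m:ℤ) + v ^ (-(m:ℤ))) := by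
        rw [W_mul_qint]
        have h0 := key (d:ℤ) (k:ℤ)
        rw [show ((1:ℤ) - (d:ℤ)) * ((d:ℤ) - (k:ℤ) - 1) = (1 - (d:ℤ)) * ((d:ℤ) - ((k+1 : ℕ) : ℤ)) by
              push_cast; ring,
            show ((d:ℤ) - (k:ℤ) - 1) = (m:ℤ) by omega,
            show (d:ℤ) * ((k:ℤ) + 2 - d) = (d:ℤ) * (((k+1 : ℕ) : ℤ) + 1 - d) by push_cast; ring] at h0
        exact h0
      exact step_alg _ _ _ _ _ _ _ _ _ (qfact_ne k) (qint_ne _ (by omega)) hkey m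
end
end
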